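/- Let T be a nonnegative real-valued random variable and Y an exponential random variable with rate λ > 0, independent of T. Then for every s > 0: E[exp(−s·max(T, Y))] = E[exp(−s·T)] − (s/(s+λ))·E[exp(−(s+λ)·T)]. (This identity produces the peak-age term W*(s+λ)·s·h*(s)/(s+λ) appearing in the paper's AoI LST, equation (9), where the accumulated age of an update is max(X_{n−1}, Y_n) + S_n with exponential inter-arrival time Y_n.) -/

import Mathlib

open scoped BigOperators
open MeasureTheory ProbabilityTheory Real Set Filter Topology
open scoped ENNReal NNReal

private lemma aux_int_Ioi {b : ℝ} (hb : 0 < b) (a : ℝ) :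
    ∫ x in Set.Ioi a, b * Real.exp (-(b * x)) = Real.exp (-(b * a)) := by
  have h : ∫ x in Set.Ioi a, b * Real.exp (-(b * x))
      = 0 - (fun x => -Real.exp (-(b * x))) a := by
    apply integral_Ioi_of_hasDerivAt_of_tendsto'
      (f := fun x => -Real.exp (-(b * x))) (f' := fun x => b * Real.exp (-(b * x)))
    · intro x _
      exact ProbabilityTheory.hasDerivAt_neg_exp_mul_exp
    · have := (exp_neg_integrableOn_Ioi a hb).const_mul b
      simp only [neg_mul] at this
      exact this
    · have h2 : Filter.Tendsto (fun x : ℝ => b * x) Filter.atTop Filter.atTop :=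
        Filter.tendsto_id.const_mul_atTop hb
      have h1 : Filter.Tendsto (fun x : ℝ => Real.exp (-(b * x))) Filter.atTop (nhds 0) :=
        Real.tendsto_exp_neg_atTop_nhds_zero.comp h2
      simpa using h1.neg
  simpa using h

private lemma aux_int_Ioc {b : ℝ} (hb : 0 < b) {t : ℝ} (ht : 0 ≤ t) :
    ∫ x in Set.Ioc 0 t, b * Real.exp (-(b * x)) = 1 - Real.exp (-(b * t)) := by
  rw [← intervalIntegral.integral_of_le ht]
  have h : ∫ x in (0:ℝ)..t, b * Real.exp (-(b * x))
      = (fun x => -Real.exp (-(b * x))) t - (fun x => -Real.exp (-(b * x))) 0 := by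
    apply intervalIntegral.integral_eq_sub_of_hasDerivAt
    · intro x _
      exact ProbabilityTheory.hasDerivAt_neg_exp_mul_exp
    · apply Continuous.intervalIntegrable
      continuity
  rw [h]
  simp only [mul_zero, neg_zero, Real.exp_zero]
  ring

/-- The key conditional computation:
`∫ exp(-(s·max t y)) dExp(λ)(y) = e^{-st} - s/(s+λ)·e^{-(s+λ)t}` for `t ≥ 0`. -/
private lemma aux_exp_max {lam s : ℝ} (hlam : 0 < lam) (hs : 0 < s) {t : ℝ} (ht : 0 ≤ t) :
    ∫ y, Real.exp (-(s * max t y)) ∂(ProbabilityTheory.expMeasure lam)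
      = Real.exp (-(s * t)) - s / (s + lam) * Real.exp (-((s + lam) * t)) := by
  have hpdf : ∀ y : ℝ, ProbabilityTheory.exponentialPDFReal lam y
      = if 0 ≤ y then lam * Real.exp (-(lam * y)) else 0 := by
    intro y
    rw [ProbabilityTheory.exponentialPDFReal, ProbabilityTheory.gammaPDFReal]
    simp [Real.Gamma_one]
  have hpdf_nonneg := ProbabilityTheory.exponentialPDFReal_nonneg hlam
  have hmeas : Measurable fun y => (ProbabilityTheory.exponentialPDFReal lam y).toNNReal :=
    (ProbabilityTheory.measurable_exponentialPDFReal lam).real_toNNReal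
  have hrw : ∫ y, Real.exp (-(s * max t y)) ∂(ProbabilityTheory.expMeasure lam)
      = ∫ y, ProbabilityTheory.exponentialPDFReal lam y * Real.exp (-(s * max t y)) := by
    rw [ProbabilityTheory.expMeasure, ProbabilityTheory.gammaMeasure]
    have : ProbabilityTheory.gammaPDF 1 lam
        = fun y => ((ProbabilityTheory.exponentialPDFReal lam y).toNNReal : ℝ≥0∞) := by
      funext y; rfl
    rw [this, integral_withDensity_eq_integral_smul hmeas]
    congr 1
    funext y
    rw [NNReal.smul_def, Real.coe_toNNReal _ (hpdf_nonneg y), smul_eq_mul]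
  rw [hrw]
  have hind : (fun y => ProbabilityTheory.exponentialPDFReal lam y * Real.exp (-(s * max t y)))
      = Set.indicator (Set.Ici 0)
          (fun y => lam * Real.exp (-(lam * y)) * Real.exp (-(s * max t y))) := by
    funext y
    rw [hpdf y, Set.indicator_apply]
    simp only [Set.mem_Ici]
    split_ifs <;> simp
  rw [hind, integral_indicator measurableSet_Ici, integral_Ici_eq_integral_Ioi]
  have hsplit : Set.Ioc 0 t ∪ Set.Ioi t = Set.Ioi (0:ℝ) := Set.Ioc_union_Ioi_eq_Ioi ht
  have hdisj : Disjoint (Set.Ioc 0 t) (Set.Ioi t) := by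
    rw [Set.disjoint_left]
    rintro x ⟨_, h1⟩ h2
    exact absurd h2 (not_lt.2 h1)
  have hslam : 0 < lam + s := by linarith
  have hint1 : IntegrableOn
      (fun y => lam * Real.exp (-(lam * y)) * Real.exp (-(s * max t y))) (Set.Ioc 0 t) := by
    apply Continuous.integrableOn_Ioc
    apply Continuous.mul
    · exact continuous_const.mul (Real.continuous_exp.comp (continuous_const.mul continuous_id).neg)
    · exact Real.continuous_exp.comp (continuous_const.mul (continuous_const.max continuous_id)).neg
  have hint2 : IntegrableOn
      (fun y => lam * Real.exp (-(lam * y)) * Real.exp (-(s * max t y))) (Set.Ioi t) := by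
    rw [integrableOn_congr_fun (g := fun y => lam * Real.exp (-((lam + s) * y)))
      ?_ measurableSet_Ioi]
    · have h := (exp_neg_integrableOn_Ioi t hslam).const_mul lam
      have heq : (fun x : ℝ => lam * Real.exp (-(lam + s) * x))
          = fun y => lam * Real.exp (-((lam + s) * y)) := by
        funext x; rw [neg_mul]
      rwa [heq] at h
    · intro y hy
      simp only [max_eq_right (le_of_lt (Set.mem_Ioi.mp hy))]
      rw [mul_assoc, ← Real.exp_add]
      have harg : -(lam * y) + -(s * y) = -((lam + s) * y) := by ring
      rw [harg]
  rw [← hsplit, setIntegral_union hdisj measurableSet_Ioi hint1 hint2]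
  have hI1 : ∫ y in Set.Ioc 0 t, lam * Real.exp (-(lam * y)) * Real.exp (-(s * max t y))
      = (1 - Real.exp (-(lam * t))) * Real.exp (-(s * t)) := by
    rw [setIntegral_congr_fun measurableSet_Ioc
      (g := fun y => lam * Real.exp (-(lam * y)) * Real.exp (-(s * t)))]
    · rw [integral_mul_const, aux_int_Ioc hlam ht]
    · intro y hy
      simp only [max_eq_left hy.2]
  have hI2 : ∫ y in Set.Ioi t, lam * Real.exp (-(lam * y)) * Real.exp (-(s * max t y))
      = lam / (lam + s) * Real.exp (-((lam + s) * t)) := by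
    rw [setIntegral_congr_fun measurableSet_Ioi
      (g := fun y => lam / (lam + s) * ((lam + s) * Real.exp (-((lam + s) * y))))]
    · rw [integral_const_mul, aux_int_Ioi hslam]
    · intro y hy
      simp only [max_eq_right (le_of_lt (Set.mem_Ioi.mp hy))]
      rw [mul_assoc, ← Real.exp_add]
      have harg : -(lam * y) + -(s * y) = -((lam + s) * y) := by ring
      rw [harg]
      field_simp
  rw [hI1, hI2]
  have he : Real.exp (-(lam * t)) * Real.exp (-(s * t)) = Real.exp (-((s + lam) * t)) := by
    rw [← Real.exp_add]; ring_nf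
  have he2 : Real.exp (-((lam + s) * t)) = Real.exp (-((s + lam) * t)) := by ring_nf
  rw [sub_mul, one_mul, he, he2]
  have hne : s + lam ≠ 0 := by linarith
  field_simp
  ring

theorem stmt_10
    {Ω : Type*} [MeasureSpace Ω] (μ : Measure Ω) [IsProbabilityMeasure μ]
    (lam : ℝ) (hlam : 0 < lam)
    (T Y : Ω → ℝ) (hT : Measurable T) (hY : Measurable Y)
    (hTnonneg : ∀ ω, 0 ≤ T ω)
    (hYexp : Measure.map Y μ = expMeasure lam)
    (hindep : IndepFun T Y μ)
    (s : ℝ) (hs : 0 < s) :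
    ∫ ω, Real.exp (-(s * max (T ω) (Y ω))) ∂μ
      = (∫ ω, Real.exp (-(s * T ω)) ∂μ)
        - (s / (s + lam)) * ∫ ω, Real.exp (-((s + lam) * T ω)) ∂μ := by
  haveI hPexp : IsProbabilityMeasure (expMeasure lam) :=
    ProbabilityTheory.isProbabilityMeasure_expMeasure hlam
  haveI hPT : IsProbabilityMeasure (μ.map T) := Measure.isProbabilityMeasure_map hT.aemeasurable
  -- the exponential measure gives no mass to negatives
  have h0 : (expMeasure lam) (Set.Iio 0) = 0 := by
    rw [ProbabilityTheory.expMeasure, ProbabilityTheory.gammaMeasure,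
      withDensity_apply _ measurableSet_Iio]
    exact ProbabilityTheory.lintegral_gammaPDF_of_nonpos le_rfl
  have hEpos : ∀ᵐ y ∂(expMeasure lam), 0 ≤ y := by
    rw [ae_iff]
    simpa only [not_le, Set.Iio] using h0
  have hYpos : ∀ᵐ ω ∂μ, 0 ≤ Y ω := by
    rw [ae_iff]
    have : {ω | ¬ 0 ≤ Y ω} = Y ⁻¹' Set.Iio 0 := by
      ext ω; simp [not_le]
    rw [this, ← Measure.map_apply hY measurableSet_Iio, hYexp]
    exact h0
  -- the bounded modification
  set F : ℝ × ℝ → ℝ := fun p => Real.exp (-(s * max (max p.1 0) (max p.2 0))) with hF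
  have hFcont : Continuous F := by
    apply Real.continuous_exp.comp
    exact (continuous_const.mul
      ((continuous_fst.max continuous_const).max (continuous_snd.max continuous_const))).neg
  have hFb : ∀ p : ℝ × ℝ, ‖F p‖ ≤ 1 := by
    intro p
    rw [hF, Real.norm_eq_abs, abs_of_pos (Real.exp_pos _), Real.exp_le_one_iff,
      neg_nonpos]
    exact mul_nonneg hs.le (le_trans (le_max_right _ _) (le_max_right _ _))
  set g : ℝ → ℝ := fun u => Real.exp (-(s * u)) - s / (s + lam) * Real.exp (-((s + lam) * u))
    with hg
  have hgcont : Continuous g := by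
    apply Continuous.sub
    · exact Real.continuous_exp.comp (continuous_const.mul continuous_id).neg
    · exact continuous_const.mul
        (Real.continuous_exp.comp (continuous_const.mul continuous_id).neg)
  -- step A
  have stepA : ∫ ω, Real.exp (-(s * max (T ω) (Y ω))) ∂μ = ∫ ω, F (T ω, Y ω) ∂μ := by
    apply integral_congr_ae
    filter_upwards [hYpos] with ω hYω
    rw [hF]
    simp only
    rw [max_eq_left (hTnonneg ω), max_eq_left hYω]
  -- step B: pass to the product measure
  have hmap : μ.map (fun ω => (T ω, Y ω)) = (μ.map T).prod (μ.map Y) :=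
    (ProbabilityTheory.indepFun_iff_map_prod_eq_prod_map_map
      hT.aemeasurable hY.aemeasurable).mp hindep
  have stepB : ∫ ω, F (T ω, Y ω) ∂μ = ∫ p, F p ∂((μ.map T).prod (expMeasure lam)) := by
    rw [← hYexp, ← hmap,
      integral_map (hT.aemeasurable.prodMk hY.aemeasurable) hFcont.aestronglyMeasurable]
  -- integrability on the product
  have hFint : Integrable F ((μ.map T).prod (expMeasure lam)) :=
    (integrable_const (1:ℝ)).mono' hFcont.aestronglyMeasurable (ae_of_all _ hFb)
  -- Fubini
  have stepC : ∫ p, F p ∂((μ.map T).prod (expMeasure lam))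
      = ∫ x, ∫ y, F (x, y) ∂(expMeasure lam) ∂(μ.map T) := integral_prod F hFint
  -- inner conditional integral
  have stepD : ∀ x : ℝ, ∫ y, F (x, y) ∂(expMeasure lam) = g (max x 0) := by
    intro x
    have h1 : ∫ y, F (x, y) ∂(expMeasure lam)
        = ∫ y, Real.exp (-(s * max (max x 0) y)) ∂(expMeasure lam) := by
      apply integral_congr_ae
      filter_upwards [hEpos] with y hy
      rw [hF]
      simp only
      rw [max_eq_left hy]
    rw [h1, aux_exp_max hlam hs (le_max_right x 0)]
  -- back from map T
  have stepE : ∫ x, ∫ y, F (x, y) ∂(expMeasure lam) ∂(μ.map T) = ∫ ω, g (T ω) ∂μ := by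
    have hc : Continuous (fun a : ℝ => g (max a 0)) :=
      hgcont.comp (continuous_id.max continuous_const)
    rw [integral_congr_ae (ae_of_all _ stepD),
      integral_map hT.aemeasurable hc.aestronglyMeasurable]
    apply integral_congr_ae
    apply ae_of_all
    intro ω
    simp only [max_eq_left (hTnonneg ω)]
  -- final linearity
  have hm1 : AEStronglyMeasurable (fun ω => Real.exp (-(s * T ω))) μ :=
    (Real.measurable_exp.comp ((measurable_const.mul hT).neg)).aestronglyMeasurable
  have hm2 : AEStronglyMeasurable (fun ω => Real.exp (-((s + lam) * T ω))) μ :=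
    (Real.measurable_exp.comp ((measurable_const.mul hT).neg)).aestronglyMeasurable
  have hb1 : Integrable (fun ω => Real.exp (-(s * T ω))) μ := by
    apply (integrable_const (1:ℝ)).mono' hm1
    apply ae_of_all
    intro ω
    rw [Real.norm_eq_abs, abs_of_pos (Real.exp_pos _), Real.exp_le_one_iff, neg_nonpos]
    exact mul_nonneg hs.le (hTnonneg ω)
  have hb2 : Integrable (fun ω => Real.exp (-((s + lam) * T ω))) μ := by
    apply (integrable_const (1:ℝ)).mono' hm2
    apply ae_of_all
    intro ω
    rw [Real.norm_eq_abs, abs_of_pos (Real.exp_pos _), Real.exp_le_one_iff, neg_nonpos]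
    exact mul_nonneg (by linarith) (hTnonneg ω)
  rw [stepA, stepB, stepC, stepE, hg]
  simp only
  rw [integral_sub hb1 (hb2.const_mul _), integral_const_mul]
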